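/- arXiv:1811.08010 — 2 statements merged into one kernel-verified Lean document; each statement's English description precedes it below -/
import Mathlib

section
/- Let Y_1, ..., Y_I be a collection of subsets of R^m. Then for every y in the convex hull of the Minkowski sum Y_1 + ... + Y_I, there exists a subset I(y) of {1,...,I} of cardinality at most m such that y belongs to the Minkowski sum of Y_i for i not in I(y), plus the Minkowski sum of conv(Y_i) for i in I(y). -/
open Pointwise

open Set Finset Module
noncomputable def sfPsi (n : ℕ) (i : Fin (n+1)) : Fin n → ℝ :=
  fun j => if (j : ℕ) = (i : ℕ) then 1 else 0

lemma sfPsi_inj (n : ℕ) : Function.Injective (sfPsi n) := by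
  intro a b hab
  by_contra hne
  have hne' : (a:ℕ) ≠ (b:ℕ) := fun h => hne (Fin.ext h)
  rcases lt_or_gt_of_ne hne' with h | h
  · have hj : (a:ℕ) < n := lt_of_lt_of_le h (Nat.lt_succ_iff.mp b.2)
    have := congrFun hab ⟨a, hj⟩
    simp [sfPsi, hne'] at this
  · have hj : (b:ℕ) < n := lt_of_lt_of_le h (Nat.lt_succ_iff.mp a.2)
    have := congrFun hab ⟨b, hj⟩
    simp [sfPsi, hne'.symm] at this

lemma sum_sfPsi (n : ℕ) (j : Fin n) : ∑ i : Fin (n+1), sfPsi n i j = 1 := by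
  rw [Finset.sum_eq_single (Fin.castSucc j)]
  · simp [sfPsi]
  · intro b _ hb
    simp only [sfPsi]
    apply if_neg
    intro h
    exact hb (Fin.ext (by simp [← h]))
  · simp

/-- **Shapley-Folkman lemma.** For subsets `Y 1, ..., Y I` of `ℝ^m` and any point `y` in the
convex hull of the Minkowski sum `Y 1 + ... + Y I`, there is a subset `S ⊆ {1,...,I}` of
cardinality at most `m` such that `y` lies in the Minkowski sum of the `Y i` for `i ∉ S` plus
the Minkowski sum of the convex hulls `conv (Y i)` for `i ∈ S`. -/
theorem shapley_folkman (m I : ℕ) (Y : Fin I → Set (Fin m → ℝ))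
    (y : Fin m → ℝ) (hy : y ∈ convexHull ℝ (∑ i, Y i)) :
    ∃ S : Finset (Fin I), S.card ≤ m ∧
      y ∈ (∑ i ∈ Sᶜ, Y i) + ∑ i ∈ S, convexHull ℝ (Y i) := by
  classical
  rw [convexHull_sum, Set.mem_fintype_sum] at hy
  obtain ⟨z, hz, hzy⟩ := hy
  -- trivial case I = 0
  rcases Nat.eq_zero_or_pos I with rfl | hI
  · refine ⟨∅, by simp, ?_⟩
    have hy0 : y = 0 := by rw [← hzy]; simp
    subst hy0
    rw [show ((∅ : Finset (Fin 0))ᶜ) = ∅ from Finset.eq_empty_of_isEmpty _]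
    simp only [Finset.sum_empty]
    simpa using Set.add_mem_add (Set.mem_zero.2 rfl) (Set.mem_zero.2 rfl)
  obtain ⟨n, rfl⟩ : ∃ n, I = n + 1 := ⟨I - 1, (Nat.succ_pred_eq_of_pos hI).symm⟩
  set c : ℝ := ((n:ℝ) + 1)⁻¹ with hc
  have hcpos : (0:ℝ) < c := by positivity
  have hnc : ((n:ℝ)+1) * c = 1 := mul_inv_cancel₀ (by positivity)
  set B : Fin (n+1) → Set ((Fin m → ℝ) × (Fin n → ℝ)) := fun i => Y i ×ˢ {sfPsi n i} with hB
  set A : Set ((Fin m → ℝ) × (Fin n → ℝ)) := ⋃ i, B i with hA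
  set P : (Fin m → ℝ) × (Fin n → ℝ) := (c • y, fun _ => c) with hP
  have hPA : P ∈ convexHull ℝ A := by
    have h2 : P = ∑ i : Fin (n+1), c • ((z i, sfPsi n i) : (Fin m → ℝ) × (Fin n → ℝ)) := by
      rw [← Finset.smul_sum]
      apply Prod.ext
      · simp [hP, Prod.fst_sum, hzy]
      · funext j
        simp only [hP, Prod.smul_snd, Prod.snd_sum, Pi.smul_apply, Finset.sum_apply]
        rw [sum_sfPsi n j, smul_eq_mul, mul_one]
    rw [h2]
    refine (convex_convexHull ℝ A).sum_mem (fun i _ => le_of_lt hcpos) ?_ ?_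
    · rw [Finset.sum_const, Finset.card_univ, Fintype.card_fin, nsmul_eq_mul]
      push_cast
      exact hnc
    · intro i _
      have hBi : (z i, sfPsi n i) ∈ convexHull ℝ (B i) := by
        rw [hB, convexHull_prod, convexHull_singleton]
        exact ⟨hz i, rfl⟩
      exact convexHull_mono (Set.subset_iUnion B i) hBi
  obtain ⟨ι, hfin, q, w, hqA, hind, hwpos, hw1, hqP⟩ :=
    eq_pos_convex_span_of_mem_convexHull hPA
  -- cardinality bound from affine independence
  have hcard : Fintype.card ι ≤ m + n + 1 := by
    have h1 := hind.card_le_finrank_succ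
    have h2 : finrank ℝ (vectorSpan ℝ (Set.range q)) ≤
        finrank ℝ ((Fin m → ℝ) × (Fin n → ℝ)) := Submodule.finrank_le _
    have h3 : finrank ℝ ((Fin m → ℝ) × (Fin n → ℝ)) = m + n := by
      rw [Module.finrank_prod, Module.finrank_fin_fun, Module.finrank_fin_fun]
    omega
  -- decompose the points
  have hdec : ∀ k : ι, ∃ i : Fin (n+1), (q k).1 ∈ Y i ∧ (q k).2 = sfPsi n i := by
    intro k
    have hk := hqA (Set.mem_range_self k)
    rw [hA, Set.mem_iUnion] at hk
    obtain ⟨i, hi⟩ := hk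
    exact ⟨i, hi.1, hi.2⟩
  choose idx hidx1 hidx2 using hdec
  set F : Fin (n+1) → Finset ι := fun i => Finset.univ.filter (fun k => idx k = i) with hF
  -- fiber sums
  have hsnd : ∀ j : Fin n, ∑ k, w k * (if idx k = Fin.castSucc j then (1:ℝ) else 0) = c := by
    intro j
    have h2 := congrFun (congrArg Prod.snd hqP) j
    simp only [Prod.snd_sum, Prod.smul_snd, Finset.sum_apply, Pi.smul_apply,
      smul_eq_mul] at h2
    rw [← (show _ = c from h2)]
    refine Finset.sum_congr rfl fun k _ => ?_
    congr 1
    rw [hidx2 k]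
    simp only [sfPsi]
    congr 1
    simp only [eq_iff_iff]
    constructor
    · intro h
      rw [h, Fin.coe_castSucc]
    · intro h
      apply Fin.ext
      rw [Fin.coe_castSucc]
      omega
  have hFsum' : ∀ j : Fin n, ∑ k ∈ F (Fin.castSucc j), w k = c := by
    intro j
    rw [hF]
    rw [Finset.sum_filter]
    rw [← hsnd j]
    refine Finset.sum_congr rfl fun k _ => ?_
    by_cases h : idx k = Fin.castSucc j <;> simp [h]
  have hw1' : ∑ i : Fin (n+1), ∑ k ∈ F i, w k = 1 := by
    rw [hF]
    rw [Finset.sum_fiberwise Finset.univ idx w]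
    exact hw1
  have hFsum : ∀ i, ∑ k ∈ F i, w k = c := by
    intro i
    rcases Fin.eq_castSucc_or_eq_last i with ⟨j, rfl⟩ | rfl
    · exact hFsum' j
    · have h4 := hw1'
      rw [Fin.sum_univ_castSucc] at h4
      have h5 : ∑ j : Fin n, ∑ k ∈ F (Fin.castSucc j), w k = n * c := by
        rw [Finset.sum_congr rfl (fun j _ => hFsum' j), Finset.sum_const,
          Finset.card_univ, Fintype.card_fin, nsmul_eq_mul]
      rw [h5] at h4
      have : ((n:ℝ)+1) * c = 1 := hnc
      linarith
  have hFne : ∀ i, (F i).Nonempty := by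
    intro i
    rw [Finset.nonempty_iff_ne_empty]
    intro h
    have := hFsum i
    rw [h, Finset.sum_empty] at this
    exact absurd this.symm (ne_of_gt hcpos)
  -- the decomposition points
  set z' : Fin (n+1) → (Fin m → ℝ) :=
    fun i => ∑ k ∈ F i, ((((n:ℝ)+1) * w k) • (q k).1) with hz'
  have hz'conv : ∀ i, z' i ∈ convexHull ℝ (Y i) := by
    intro i
    refine (convex_convexHull ℝ (Y i)).sum_mem (fun k _ => ?_) ?_ (fun k hk => ?_)
    · have := hwpos k; positivity
    · rw [← Finset.mul_sum, hFsum i, hnc]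
    · have hki : idx k = i := by
        have := (Finset.mem_filter.mp hk).2
        simpa [hF] using this
      exact subset_convexHull ℝ (Y i) (hki ▸ hidx1 k)
  have hz'mem : ∀ i, (F i).card ≤ 1 → z' i ∈ Y i := by
    intro i h
    obtain ⟨k, hk⟩ := Finset.card_eq_one.mp (le_antisymm h (hFne i).card_pos)
    have hwk : w k = c := by
      have := hFsum i
      rw [hk, Finset.sum_singleton] at this
      exact this
    have hki : idx k = i := by
      have : k ∈ F i := hk ▸ Finset.mem_singleton_self k
      simpa [hF] using (Finset.mem_filter.mp this).2
    rw [hz']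
    simp only
    rw [hk, Finset.sum_singleton, hwk, hnc, one_smul]
    exact hki ▸ hidx1 k
  have hfst : ∑ k, w k • (q k).1 = c • y := by
    have h1 := congrArg Prod.fst hqP
    simpa only [Prod.fst_sum, Prod.smul_fst] using h1
  have hy' : ∑ i : Fin (n+1), z' i = y := by
    rw [hz']
    simp only
    rw [Finset.sum_fiberwise Finset.univ idx (fun k => ((((n:ℝ)+1) * w k) • (q k).1))]
    have : ∀ k : ι, ((((n:ℝ)+1) * w k) • (q k).1) = ((n:ℝ)+1) • (w k • (q k).1) := by
      intro k; rw [smul_smul]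
    rw [Finset.sum_congr rfl (fun k _ => this k), ← Finset.smul_sum, hfst,
      smul_smul, hnc, one_smul]
  -- the exceptional set
  set S : Finset (Fin (n+1)) := Finset.univ.filter (fun i => 1 < (F i).card) with hS
  have hScard : S.card ≤ m := by
    have hsum : ∑ i : Fin (n+1), (F i).card = Fintype.card ι := by
      rw [← Finset.card_univ (α := ι)]
      exact (Finset.card_eq_sum_card_fiberwise (fun k _ => Finset.mem_univ (idx k))).symm
    have lower : ∀ i : Fin (n+1), 1 + (if i ∈ S then 1 else 0) ≤ (F i).card := by
      intro i
      by_cases h : i ∈ S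
      · have : 1 < (F i).card := by simpa [hS] using (Finset.mem_filter.mp h).2
        simp [h]; omega
      · simpa [h] using (hFne i).card_pos
    have h6 : ∑ i : Fin (n+1), (1 + (if i ∈ S then 1 else 0)) ≤ ∑ i : Fin (n+1), (F i).card :=
      Finset.sum_le_sum fun i _ => lower i
    rw [Finset.sum_add_distrib, Finset.sum_const, Finset.card_univ, Fintype.card_fin,
      Finset.sum_ite_mem, Finset.univ_inter, Finset.sum_const, smul_eq_mul, mul_one,
      smul_eq_mul, mul_one] at h6
    omega
  refine ⟨S, hScard, ?_⟩
  rw [← hy', ← Finset.sum_compl_add_sum S]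
  refine Set.add_mem_add ?_ ?_
  · refine Set.finset_sum_mem_finset_sum _ _ _ fun i hi => hz'mem i ?_
    have : ¬ 1 < (F i).card := by
      intro h
      exact (Finset.mem_compl.mp hi) (by simp [hS, h])
    omega
  · exact Set.finset_sum_mem_finset_sum _ _ _ fun i _ => hz'conv i
end

section
/- Let h_1, ..., h_I : R^t → R be continuous functions, each with compact convex effective domain. Define p(0) = inf{Σ_{i=1}^I h_i(u_i) : Σ_{i=1}^I u_i = 0, u_i ∈ dom h_i} and let cl h_i denote the convex closure of h_i, with Δ_i := sup_u (h_i(u) − cl h_i(u)) and Δ := max_i Δ_i. Let (clp)(0) := inf{Σ_{i=1}^I cl h_i(u_i) : Σ u_i = 0} denote the corresponding convexified value (equivalently inf{w : (0,w) ∈ conv(Y_1+...+Y_I)} with Y_i the graph-epigraph set of h_i). Then p(0) − (clp)(0) ≤ (t+1)·Δ. -/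
open Module Finset


/-- Shapley–Folkman style lemma. -/
lemma sf_aux {E : Type*} [AddCommGroup E] [Module ℝ E] [FiniteDimensional ℝ E] {I : ℕ}
    (Y : Fin I → Set E) (v : E) :
    ∀ (N : ℕ) (T : Fin I → Finset E) (a : Fin I → E → ℝ),
      (∑ i, (T i).card = N) →
      (∀ i, ↑(T i) ⊆ Y i) →
      (∀ i, ∀ e ∈ T i, 0 ≤ a i e) →
      (∀ i, ∑ e ∈ T i, a i e = 1) →
      (∑ i, ∑ e ∈ T i, a i e • e = v) →
      ∃ (y : Fin I → E) (B : Finset (Fin I)),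
        (∀ i, y i ∈ convexHull ℝ (Y i)) ∧ (∑ i, y i = v) ∧
        (∀ i ∉ B, y i ∈ Y i) ∧ B.card ≤ finrank ℝ E := by
  intro N
  induction N using Nat.strong_induction_on with
  | _ N ih =>
  intro T a hN hTY ha0 ha1 hsum
  classical
  have hTne : ∀ i, (T i).Nonempty := by
    intro i
    rcases (T i).eq_empty_or_nonempty with he | hn
    · exfalso; have := ha1 i; rw [he] at this; simp at this
    · exact hn
  by_cases hbig : finrank ℝ E + I < N
  · -- reduction step
    set K : Finset ((_ : Fin I) × E) := Finset.univ.sigma T with hK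
    have hcardK : K.card = N := by rw [hK, Finset.card_sigma]; simpa using hN
    set g : ((_ : Fin I) × E) → E × (Fin I → ℝ) := fun k => (k.2, Pi.single k.1 1) with hg
    have hcard2 : finrank ℝ (E × (Fin I → ℝ)) < Fintype.card {x // x ∈ K} := by
      rw [Fintype.card_coe, hcardK, Module.finrank_prod]
      simpa using hbig
    have hnli : ¬ LinearIndependent ℝ (fun k : {x // x ∈ K} => g k.1) :=
      fun hli => absurd hli.fintype_card_le_finrank (not_le.mpr hcard2)
    obtain ⟨φ, hφ0, k₁, hk₁⟩ := Fintype.not_linearIndependent_iff.mp hnli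
    set b : (i : Fin I) → E → ℝ := fun i e =>
      if hk : (⟨i, e⟩ : (_ : Fin I) × E) ∈ K then φ ⟨⟨i, e⟩, hk⟩ else 0 with hb
    have hbval : ∀ k : {x // x ∈ K}, b k.1.1 k.1.2 = φ k := by
      rintro ⟨⟨i, e⟩, hk⟩
      simp only [hb]
      rw [dif_pos hk]
    have hrel : ∑ k ∈ K, b k.1 k.2 • g k = 0 := by
      rw [← Finset.sum_coe_sort K (fun k => b k.1 k.2 • g k)]
      calc (∑ k : {x // x ∈ K}, b k.1.1 k.1.2 • g k.1)
          = ∑ k : {x // x ∈ K}, φ k • g k.1 := by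
            apply Finset.sum_congr rfl; intro k _; rw [hbval k]
        _ = 0 := hφ0
    have hrel1 : ∑ i, ∑ e ∈ T i, b i e • e = 0 := by
      have h := congrArg Prod.fst hrel
      rw [Prod.fst_sum] at h
      simp only [hg, Prod.smul_mk, Prod.fst_zero] at h
      rw [← h, hK, Finset.sum_sigma]
    have hrel2 : ∀ i, ∑ e ∈ T i, b i e = 0 := by
      intro i
      have h := congrArg Prod.snd hrel
      rw [Prod.snd_sum] at h
      simp only [hg, Prod.smul_mk, Prod.snd_zero] at h
      have h2 := congrFun h i
      rw [Finset.sum_apply] at h2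
      simp only [Pi.smul_apply, Pi.zero_apply, smul_eq_mul] at h2
      rw [hK, Finset.sum_sigma] at h2
      have h3 : ∀ i' : Fin I,
          (∑ e ∈ T i', b i' e * (Pi.single i' 1 : Fin I → ℝ) i)
          = if i = i' then ∑ e ∈ T i', b i' e else 0 := by
        intro i'
        by_cases hii : i = i'
        · subst hii; simp [Pi.single_apply]
        · simp [Pi.single_apply, hii]
      rw [Finset.sum_congr rfl (fun i' _ => h3 i'), Finset.sum_ite_eq] at h2
      simpa using h2
    -- there is a strictly negative coefficient
    have hneg : ∃ k ∈ K, b k.1 k.2 < 0 := by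
      obtain ⟨⟨i₁, e₁⟩, hk₁K⟩ := k₁
      by_contra hcon
      push_neg at hcon
      have hall : ∀ e ∈ T i₁, b i₁ e = 0 := by
        have hnn : ∀ e ∈ T i₁, 0 ≤ b i₁ e := by
          intro e he
          exact hcon ⟨i₁, e⟩ (Finset.mem_sigma.mpr ⟨Finset.mem_univ _, he⟩)
        intro e he
        exact (Finset.sum_eq_zero_iff_of_nonneg hnn).mp (hrel2 i₁) e he
      have : b i₁ e₁ = 0 := hall e₁ (by
        have := Finset.mem_sigma.mp hk₁K; exact this.2)
      rw [hbval ⟨⟨i₁, e₁⟩, hk₁K⟩] at this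
      exact hk₁ this
    set Neg : Finset ((_ : Fin I) × E) := K.filter (fun k => b k.1 k.2 < 0) with hNeg
    have hNegne : Neg.Nonempty := by
      obtain ⟨k, hkK, hkneg⟩ := hneg
      exact ⟨k, Finset.mem_filter.mpr ⟨hkK, hkneg⟩⟩
    obtain ⟨k₀, hk₀Neg, hk₀min⟩ :=
      Finset.exists_min_image Neg (fun k => a k.1 k.2 / (-(b k.1 k.2))) hNegne
    have hk₀K : k₀ ∈ K := (Finset.mem_filter.mp hk₀Neg).1
    have hk₀b : b k₀.1 k₀.2 < 0 := (Finset.mem_filter.mp hk₀Neg).2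
    have hk₀T : k₀.2 ∈ T k₀.1 := (Finset.mem_sigma.mp hk₀K).2
    set τ : ℝ := a k₀.1 k₀.2 / (-(b k₀.1 k₀.2)) with hτ
    have hτ0 : 0 ≤ τ := div_nonneg (ha0 _ _ hk₀T) (by linarith)
    set a' : Fin I → E → ℝ := fun i e => a i e + τ * b i e with ha'
    have ha'0 : ∀ i, ∀ e ∈ T i, 0 ≤ a' i e := by
      intro i e he
      rcases lt_or_ge (b i e) 0 with hbe | hbe
      · have hmem : (⟨i, e⟩ : (_ : Fin I) × E) ∈ Neg :=
          Finset.mem_filter.mpr ⟨Finset.mem_sigma.mpr ⟨Finset.mem_univ _, he⟩, hbe⟩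
        have := hk₀min _ hmem
        have h2 : τ * (-(b i e)) ≤ a i e := by
          rw [← le_div_iff₀ (by linarith)]
          exact this
        simp only [ha']
        nlinarith
      · simp only [ha']
        have := ha0 i e he
        nlinarith
    have hk₀zero : a' k₀.1 k₀.2 = 0 := by
      have hbne : b k₀.fst k₀.snd ≠ 0 := ne_of_lt hk₀b
      simp only [ha', hτ]
      rw [div_neg, neg_mul, div_mul_cancel₀ _ hbne, add_neg_cancel]
    have ha'1 : ∀ i, ∑ e ∈ T i, a' i e = 1 := by
      intro i
      simp only [ha']
      rw [Finset.sum_add_distrib, ha1 i, ← Finset.mul_sum, hrel2 i, mul_zero, add_zero]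
    have ha'sum : ∑ i, ∑ e ∈ T i, a' i e • e = v := by
      simp only [ha', add_smul]
      rw [← hsum]
      have : ∀ i, ∑ e ∈ T i, (a i e • e + (τ * b i e) • e)
          = (∑ e ∈ T i, a i e • e) + τ • ∑ e ∈ T i, b i e • e := by
        intro i
        rw [Finset.sum_add_distrib, Finset.smul_sum]
        congr 1
        apply Finset.sum_congr rfl
        intro e _
        rw [mul_smul]
      rw [Finset.sum_congr rfl (fun i _ => this i), Finset.sum_add_distrib,
        ← Finset.smul_sum, hrel1, smul_zero, add_zero]
    set T' : Fin I → Finset E := fun i => (T i).filter (fun e => a' i e ≠ 0) with hT'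
    have hT'sub : ∀ i, T' i ⊆ T i := fun i => Finset.filter_subset _ _
    have hcard' : ∑ i, (T' i).card < N := by
      rw [← hN]
      apply Finset.sum_lt_sum (fun i _ => Finset.card_le_card (hT'sub i))
      refine ⟨k₀.1, Finset.mem_univ _, ?_⟩
      apply Finset.card_lt_card
      refine ⟨hT'sub _, fun hsub => ?_⟩
      have := hsub hk₀T
      rw [hT'] at this
      exact (Finset.mem_filter.mp this).2 hk₀zero
    have key := ih _ hcard' T' a' rfl
      (fun i => Set.Subset.trans (Finset.coe_subset.mpr (hT'sub i)) (hTY i))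
      (fun i e he => ha'0 i e (hT'sub i he))
      (fun i => by
        rw [hT', Finset.sum_filter_ne_zero]
        exact ha'1 i)
      (by
        have : ∀ i, ∑ e ∈ T' i, a' i e • e = ∑ e ∈ T i, a' i e • e := by
          intro i
          rw [hT']
          apply Finset.sum_filter_of_ne
          intro e _ hne hzero
          apply hne
          rw [hzero, zero_smul]
        rw [Finset.sum_congr rfl (fun i _ => this i)]
        exact ha'sum)
    exact key
  · -- conclusion step
    push_neg at hbig
    refine ⟨fun i => ∑ e ∈ T i, a i e • e, Finset.univ.filter (fun i => 2 ≤ (T i).card),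
      ?_, hsum, ?_, ?_⟩
    · intro i
      have := Finset.centerMass_mem_convexHull (T i) (ha0 i) (by rw [ha1 i]; norm_num)
        (fun e he => hTY i he) (z := id)
      rwa [Finset.centerMass, ha1 i, inv_one, one_smul] at this
    · intro i hiB
      simp only [Finset.mem_filter, Finset.mem_univ, true_and, not_le] at hiB
      have h1 : (T i).card = 1 := le_antisymm (by omega) (Finset.card_pos.mpr (hTne i))
      obtain ⟨e, he⟩ := Finset.card_eq_one.mp h1
      have hae : a i e = 1 := by have := ha1 i; rwa [he, Finset.sum_singleton] at this
      show (∑ e ∈ T i, a i e • e) ∈ Y i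
      have h2 : ∑ e' ∈ T i, a i e' • e' = e := by rw [he, Finset.sum_singleton, hae, one_smul]
      rw [h2]
      exact hTY i (by rw [he]; exact Finset.mem_singleton_self e)
    · have hsum_ge : I + (Finset.univ.filter (fun i => 2 ≤ (T i).card)).card ≤ N := by
        rw [← hN]
        calc I + (Finset.univ.filter (fun i => 2 ≤ (T i).card)).card
            = (∑ _i : Fin I, 1) + ∑ i : Fin I, (if 2 ≤ (T i).card then 1 else 0) := by
              rw [Finset.sum_const, Finset.card_filter]
              simp
          _ = ∑ i : Fin I, (1 + if 2 ≤ (T i).card then 1 else 0) :=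
              (Finset.sum_add_distrib).symm
          _ ≤ ∑ i, (T i).card := by
              apply Finset.sum_le_sum
              intro i _
              have h1 : 1 ≤ (T i).card := Finset.card_pos.mpr (hTne i)
              rcases le_or_gt 2 (T i).card with h2 | h2
              · rw [if_pos h2]; omega
              · rw [if_neg (by omega)]; omega
      omega


/-- Pad a convex representation with one more (zero-weight) point. -/
lemma rep_pad {E : Type*} [AddCommGroup E] [Module ℝ E] {Y : Set E} (y₀ : E) (hy₀ : y₀ ∈ Y)
    {x : E} {m : ℕ}
    (hm : ∃ (a : Fin m → ℝ) (z : Fin m → E), (∀ j, 0 ≤ a j) ∧ ∑ j, a j = 1 ∧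
      (∀ j, z j ∈ Y) ∧ ∑ j, a j • z j = x) :
    ∃ (a : Fin (m + 1) → ℝ) (z : Fin (m + 1) → E), (∀ j, 0 ≤ a j) ∧ ∑ j, a j = 1 ∧
      (∀ j, z j ∈ Y) ∧ ∑ j, a j • z j = x := by
  obtain ⟨a, z, h0, h1, hzY, hsum⟩ := hm
  refine ⟨Fin.snoc a 0, Fin.snoc z y₀, ?_, ?_, ?_, ?_⟩
  · intro j
    induction j using Fin.lastCases with
    | last => simp
    | cast j => simp only [Fin.snoc_castSucc]; exact h0 j
  · rw [Fin.sum_univ_castSucc]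
    simp only [Fin.snoc_castSucc, Fin.snoc_last, add_zero]
    exact h1
  · intro j
    induction j using Fin.lastCases with
    | last => simpa using hy₀
    | cast j => simp only [Fin.snoc_castSucc]; exact hzY j
  · rw [Fin.sum_univ_castSucc]
    simp only [Fin.snoc_castSucc, Fin.snoc_last, zero_smul, add_zero]
    exact hsum

/-- Carathéodory: a point of the convex hull is a combination of `n ≥ finrank + 1` points. -/
lemma cara_rep {E : Type*} [AddCommGroup E] [Module ℝ E] [FiniteDimensional ℝ E] (n : ℕ)
    (hn : finrank ℝ E + 1 ≤ n) {Y : Set E} (hY : Y.Nonempty) {x : E}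
    (hx : x ∈ convexHull ℝ Y) :
    ∃ (a : Fin n → ℝ) (z : Fin n → E), (∀ j, 0 ≤ a j) ∧ ∑ j, a j = 1 ∧
      (∀ j, z j ∈ Y) ∧ ∑ j, a j • z j = x := by
  classical
  obtain ⟨y₀, hy₀⟩ := hY
  obtain ⟨ι, hfin, z, w, hzY, haff, hw0, hw1, hwz⟩ := eq_pos_convex_span_of_mem_convexHull hx
  have hcard : Fintype.card ι ≤ n := by
    have h1 := haff.card_le_finrank_succ
    have h2 : finrank ℝ (vectorSpan ℝ (Set.range z)) ≤ finrank ℝ E := Submodule.finrank_le _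
    omega
  set m := Fintype.card ι with hm
  have base : ∃ (a : Fin m → ℝ) (zz : Fin m → E), (∀ j, 0 ≤ a j) ∧ ∑ j, a j = 1 ∧
      (∀ j, zz j ∈ Y) ∧ ∑ j, a j • zz j = x := by
    set e := Fintype.equivFin ι with he
    refine ⟨fun k => w (e.symm k), fun k => z (e.symm k), fun k => (hw0 _).le, ?_, ?_, ?_⟩
    · rw [Equiv.sum_comp e.symm w]; exact hw1
    · intro k; exact hzY (Set.mem_range_self _)
    · rw [Equiv.sum_comp e.symm (fun i => w i • z i)]; exact hwz
  clear_value m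
  clear hm hn
  induction n, hcard using Nat.le_induction with
  | base => exact base
  | succ k hk ih => exact rep_pad y₀ hy₀ ih

/-- A point of a convex hull as a finitely supported convex combination. -/
lemma finset_rep {E : Type*} [AddCommGroup E] [Module ℝ E] {Y : Set E} {x : E}
    (hx : x ∈ convexHull ℝ Y) :
    ∃ (T : Finset E) (w : E → ℝ), ↑T ⊆ Y ∧ (∀ e ∈ T, 0 ≤ w e) ∧
      ∑ e ∈ T, w e = 1 ∧ ∑ e ∈ T, w e • e = x := by
  rw [convexHull_eq_union_convexHull_finite_subsets] at hx
  simp only [Set.mem_iUnion] at hx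
  obtain ⟨T, hTY, hxT⟩ := hx
  rw [Finset.convexHull_eq] at hxT
  obtain ⟨w, hw0, hw1, hwx⟩ := hxT
  refine ⟨T, w, hTY, hw0, hw1, ?_⟩
  rwa [Finset.centerMass_eq_of_sum_1 _ _ hw1] at hwx


/-- Convex closure of `h` on the domain `D`, via Carathéodory combinations of `t+2` points. -/
noncomputable def clCara (t : ℕ) (D : Set (Fin t → ℝ)) (h : (Fin t → ℝ) → ℝ)
    (v : Fin t → ℝ) : ℝ :=
  sInf {s | ∃ (a : Fin (t + 2) → ℝ) (u : Fin (t + 2) → Fin t → ℝ),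
    (∀ j, 0 ≤ a j) ∧ ∑ j, a j = 1 ∧ (∀ j, u j ∈ D) ∧ v = ∑ j, a j • u j ∧
    s = ∑ j, a j * h (u j)}


/-- Let `h_1, ..., h_I : ℝ^t → ℝ` be continuous on compact convex domains `D i`. With
`p(0) = inf {Σ_i h_i(u_i) : Σ_i u_i = 0, u_i ∈ D i}`, the convexified value
`(cl p)(0) = inf {Σ_i cl h_i(u_i) : Σ_i u_i = 0, u_i ∈ conv (D i)}`, and
`Δ = max_i sup_{u ∈ D i} (h_i(u) − cl h_i(u))`, we have `p(0) − (cl p)(0) ≤ (t+1)·Δ`. -/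
theorem gap_p_clp_le (t I : ℕ) (hI : 0 < I)
    (D : Fin I → Set (Fin t → ℝ)) (h : Fin I → (Fin t → ℝ) → ℝ)
    (hDc : ∀ i, IsCompact (D i)) (hDconv : ∀ i, Convex ℝ (D i))
    (hcont : ∀ i, ContinuousOn (h i) (D i))
    (p0 clp0 Δ : ℝ)
    (hp0 : p0 = sInf {s | ∃ u : Fin I → Fin t → ℝ,
      (∀ i, u i ∈ D i) ∧ ∑ i, u i = 0 ∧ s = ∑ i, h i (u i)})
    (hclp0 : clp0 = sInf {s | ∃ u : Fin I → Fin t → ℝ,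
      (∀ i, u i ∈ convexHull ℝ (D i)) ∧ ∑ i, u i = 0 ∧
        s = ∑ i, clCara t (D i) (h i) (u i)})
    (hΔ : Δ = ⨆ i : Fin I, sSup {d | ∃ u ∈ D i, d = h i u - clCara t (D i) (h i) u}) :
    p0 - clp0 ≤ (t + 1 : ℝ) * Δ := by
  classical
  set cl : Fin I → (Fin t → ℝ) → ℝ := fun i => clCara t (D i) (h i) with hcldef
  set Sset : Fin I → (Fin t → ℝ) → Set ℝ := fun i v =>
    {s | ∃ (aa : Fin (t + 2) → ℝ) (uu : Fin (t + 2) → Fin t → ℝ),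
      (∀ j, 0 ≤ aa j) ∧ ∑ j, aa j = 1 ∧ (∀ j, uu j ∈ D i) ∧ v = ∑ j, aa j • uu j ∧
      s = ∑ j, aa j * h i (uu j)} with hSsetdef
  have hclS : ∀ i v, cl i v = sInf (Sset i v) := fun i v => rfl
  -- lower and upper bounds of h on the domains
  have hminex : ∀ i, ∃ mi : ℝ, ∀ v ∈ D i, mi ≤ h i v := by
    intro i
    rcases (D i).eq_empty_or_nonempty with he | hne
    · exact ⟨0, by simp [he]⟩
    · obtain ⟨um, humD, hum⟩ := (hDc i).exists_isMinOn hne (hcont i)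
      exact ⟨h i um, fun v hv => hum hv⟩
  choose m hm using hminex
  have hmaxex : ∀ i, ∃ Mi : ℝ, ∀ v ∈ D i, h i v ≤ Mi := by
    intro i
    rcases (D i).eq_empty_or_nonempty with he | hne
    · exact ⟨0, by simp [he]⟩
    · obtain ⟨uM, huMD, huM⟩ := (hDc i).exists_isMaxOn hne (hcont i)
      exact ⟨h i uM, fun v hv => huM hv⟩
  choose M hM using hmaxex
  have hSlb : ∀ i v s, s ∈ Sset i v → m i ≤ s := by
    rintro i v s ⟨aa, uu, h0, h1, huD, -, rfl⟩
    calc m i = ∑ j, aa j * m i := by rw [← Finset.sum_mul, h1, one_mul]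
      _ ≤ ∑ j, aa j * h i (uu j) :=
        Finset.sum_le_sum fun j _ => mul_le_mul_of_nonneg_left (hm i _ (huD j)) (h0 j)
  have hbdd : ∀ i v, BddBelow (Sset i v) := fun i v => ⟨m i, fun s hs => hSlb i v s hs⟩
  have hself : ∀ i v, v ∈ D i → h i v ∈ Sset i v := by
    intro i v hv
    refine ⟨fun j => if j = 0 then 1 else 0, fun _ => v, ?_, by simp, fun _ => hv, ?_, ?_⟩
    · intro j; dsimp only; split <;> norm_num
    · rw [← Finset.sum_smul]; simp
    · rw [← Finset.sum_mul]; simp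
  have hcl_le : ∀ i v, v ∈ D i → cl i v ≤ h i v := by
    intro i v hv
    rw [hclS]
    exact csInf_le (hbdd i v) (hself i v hv)
  have hcl_ge : ∀ i v, v ∈ D i → m i ≤ cl i v := by
    intro i v hv
    rw [hclS]
    exact le_csInf ⟨_, hself i v hv⟩ (fun s hs => hSlb i v s hs)
  -- facts about Δ
  set Sd : Fin I → Set ℝ := fun i => {d | ∃ u ∈ D i, d = h i u - cl i u} with hSddef
  have hSdbdd : ∀ i, BddAbove (Sd i) := by
    intro i
    refine ⟨M i - m i, ?_⟩
    rintro d ⟨u, hu, rfl⟩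
    have h1 := hM i u hu
    have h2 := hcl_ge i u hu
    linarith
  have hSdnn : ∀ i, 0 ≤ sSup (Sd i) := by
    intro i
    rcases (D i).eq_empty_or_nonempty with he | ⟨u₀, hu₀⟩
    · have hempty : Sd i = ∅ := by
        rw [hSddef]; ext d; simp [he]
      rw [hempty, Real.sSup_empty]
    · have h1 : h i u₀ - cl i u₀ ∈ Sd i := ⟨u₀, hu₀, rfl⟩
      have h2 : 0 ≤ h i u₀ - cl i u₀ := by have := hcl_le i u₀ hu₀; linarith
      exact le_trans h2 (le_csSup (hSdbdd i) h1)
  have hSle : ∀ i, sSup (Sd i) ≤ Δ := by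
    intro i
    rw [hΔ]
    exact le_ciSup (f := fun i : Fin I =>
        sSup {d | ∃ u ∈ D i, d = h i u - clCara t (D i) (h i) u})
      (Set.Finite.bddAbove (Set.finite_range _)) i
  have hΔ0 : 0 ≤ Δ := le_trans (hSdnn ⟨0, hI⟩) (hSle ⟨0, hI⟩)
  have hgap : ∀ i u, u ∈ D i → h i u ≤ cl i u + Δ := by
    intro i u hu
    have h1 : h i u - cl i u ≤ sSup (Sd i) := le_csSup (hSdbdd i) ⟨u, hu, rfl⟩
    have h2 := hSle i
    linarith
  set P := {s | ∃ u : Fin I → Fin t → ℝ,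
      (∀ i, u i ∈ D i) ∧ ∑ i, u i = 0 ∧ s = ∑ i, h i (u i)} with hPdef
  set Q := {s | ∃ u : Fin I → Fin t → ℝ,
      (∀ i, u i ∈ convexHull ℝ (D i)) ∧ ∑ i, u i = 0 ∧ s = ∑ i, cl i (u i)} with hQdef
  rw [hp0, hclp0]
  by_cases hfeas : ∃ u : Fin I → Fin t → ℝ, (∀ i, u i ∈ D i) ∧ ∑ i, u i = 0
  · -- main case
    obtain ⟨u₀, hu₀D, hu₀s⟩ := hfeas
    have hPbdd : BddBelow P := by
      refine ⟨∑ i, m i, ?_⟩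
      rintro s ⟨u, hu, -, rfl⟩
      exact Finset.sum_le_sum fun i _ => hm i _ (hu i)
    have hQbdd : BddBelow Q := by
      refine ⟨∑ i, m i, ?_⟩
      rintro s ⟨u, hu, -, rfl⟩
      exact Finset.sum_le_sum fun i _ => hcl_ge i _ ((hDconv i).convexHull_eq ▸ hu i)
    have hQne : Q.Nonempty :=
      ⟨∑ i, cl i (u₀ i), u₀, fun i => subset_convexHull ℝ _ (hu₀D i), hu₀s, rfl⟩
    suffices hsuf : ∀ ε > 0, sInf P ≤ (sInf Q + (t + 1 : ℝ) * Δ) + ε by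
      have := le_of_forall_pos_le_add hsuf
      linarith
    intro ε hε
    have hI' : (0:ℝ) < I := by exact_mod_cast hI
    obtain ⟨s, hsQ, hslt⟩ := Real.lt_sInf_add_pos hQne (by linarith : (0:ℝ) < ε / 2)
    obtain ⟨u, huD', husum, hsval⟩ := hsQ
    have huD : ∀ i, u i ∈ D i := fun i => (hDconv i).convexHull_eq ▸ huD' i
    have hδ : (0:ℝ) < ε / (2 * I) := by positivity
    have hrep' : ∀ i, ∃ (aa : Fin (t+2) → ℝ) (zz : Fin (t+2) → Fin t → ℝ),
        (∀ j, 0 ≤ aa j) ∧ ∑ j, aa j = 1 ∧ (∀ j, zz j ∈ D i) ∧ u i = ∑ j, aa j • zz j ∧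
        ∑ j, aa j * h i (zz j) < cl i (u i) + ε / (2 * I) := by
      intro i
      have := Real.lt_sInf_add_pos ⟨_, hself i (u i) (huD i)⟩ hδ
      rw [← hclS] at this
      obtain ⟨s', ⟨aa, zz, h0, h1, hzD, hzu, rfl⟩, hlt⟩ := this
      exact ⟨aa, zz, h0, h1, hzD, hzu, hlt⟩
    choose a z ha0 ha1 hzD hzu hval using hrep'
    set Y : Fin I → Set ((Fin t → ℝ) × ℝ) := fun i => (fun w => (w, h i w)) '' (D i) with hYdef
    set x : Fin I → (Fin t → ℝ) × ℝ := fun i => (u i, ∑ j, a i j * h i (z i j)) with hxdef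
    have hfr : finrank ℝ ((Fin t → ℝ) × ℝ) = t + 1 := by simp
    have hxhull : ∀ i, x i ∈ convexHull ℝ (Y i) := by
      intro i
      have heq : x i = ∑ j, a i j • ((z i j, h i (z i j)) : (Fin t → ℝ) × ℝ) := by
        rw [hxdef]
        dsimp only
        refine Prod.ext ?_ ?_
        · rw [Prod.fst_sum]
          simp only [Prod.smul_mk]
          exact hzu i
        · rw [Prod.snd_sum]
          simp only [Prod.smul_mk, smul_eq_mul]
      rw [heq]
      refine Convex.sum_mem (convex_convexHull ℝ _) (fun j _ => ha0 i j) (ha1 i) ?_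
      intro j _
      exact subset_convexHull ℝ _ ⟨z i j, hzD i j, rfl⟩
    have hfrep := fun i => finset_rep (hxhull i)
    choose T w' hTY hw0 hw1 hwx using hfrep
    obtain ⟨y, B, hyhull, hysum, hyY, hBcard⟩ := sf_aux Y (∑ i, x i) (∑ i, (T i).card) T w'
      rfl hTY hw0 hw1 (Finset.sum_congr rfl (fun i _ => hwx i))
    have hysum1 : ∑ i, (y i).1 = 0 := by
      have h1 := congrArg Prod.fst hysum
      rw [Prod.fst_sum, Prod.fst_sum] at h1
      rw [h1]
      simpa [hxdef] using husum
    have hysum2 : ∑ i, (y i).2 = ∑ i, ∑ j, a i j * h i (z i j) := by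
      have h1 := congrArg Prod.snd hysum
      rw [Prod.snd_sum, Prod.snd_sum] at h1
      rw [h1]
    have hyD : ∀ i, (y i).1 ∈ D i := by
      intro i
      have h1 : (y i).1 ∈ (LinearMap.fst ℝ (Fin t → ℝ) ℝ) '' (convexHull ℝ (Y i)) :=
        ⟨y i, hyhull i, rfl⟩
      rw [LinearMap.image_convexHull] at h1
      have h2 : (LinearMap.fst ℝ (Fin t → ℝ) ℝ) '' (Y i) = D i := by
        ext v
        constructor
        · rintro ⟨p, ⟨q, hq, rfl⟩, rfl⟩; exact hq
        · intro hv; exact ⟨(v, h i v), ⟨v, hv, rfl⟩, rfl⟩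
      rw [h2, (hDconv i).convexHull_eq] at h1
      exact h1
    have hYne : ∀ i, (Y i).Nonempty := fun i => ⟨_, ⟨u₀ i, hu₀D i, rfl⟩⟩
    have hcl_le_y : ∀ i, cl i (y i).1 ≤ (y i).2 := by
      intro i
      obtain ⟨a', z', h0', h1', hz'Y, hsum'⟩ := cara_rep (t + 2) (by rw [hfr]) (hYne i) (hyhull i)
      have hex : ∀ j, ∃ v, v ∈ D i ∧ z' j = (v, h i v) := by
        intro j
        obtain ⟨v, hv, he⟩ := hz'Y j
        exact ⟨v, hv, he.symm⟩
      choose v hvD hvz using hex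
      have hfst : (y i).1 = ∑ j, a' j • v j := by
        rw [← hsum', Prod.fst_sum]
        refine Finset.sum_congr rfl fun j _ => ?_
        rw [hvz j]
        rfl
      have hsnd : (y i).2 = ∑ j, a' j * h i (v j) := by
        rw [← hsum', Prod.snd_sum]
        refine Finset.sum_congr rfl fun j _ => ?_
        rw [hvz j]
        rfl
      rw [hclS]
      exact csInf_le (hbdd i _) ⟨a', v, h0', h1', hvD, hfst, hsnd⟩
    have hp_le : sInf P ≤ ∑ i, h i ((y i).1) :=
      csInf_le hPbdd ⟨fun i => (y i).1, hyD, hysum1, rfl⟩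
    have hstep : ∀ i, h i ((y i).1) ≤ (y i).2 + (if i ∈ B then Δ else 0) := by
      intro i
      by_cases hiB : i ∈ B
      · rw [if_pos hiB]
        have h1 := hgap i _ (hyD i)
        have h2 := hcl_le_y i
        linarith
      · rw [if_neg hiB, add_zero]
        obtain ⟨v, hv, he⟩ := hyY i hiB
        have h1 : (y i).1 = v := by rw [← he]
        have h2 : (y i).2 = h i v := by rw [← he]
        rw [h1, h2]
    have h5 : ∑ i, h i ((y i).1) ≤ (∑ i, ∑ j, a i j * h i (z i j)) + (t + 1 : ℝ) * Δ := by
      calc ∑ i, h i ((y i).1) ≤ ∑ i, ((y i).2 + if i ∈ B then Δ else 0) :=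
            Finset.sum_le_sum fun i _ => hstep i
        _ = (∑ i, (y i).2) + ∑ i, (if i ∈ B then Δ else 0) := Finset.sum_add_distrib
        _ = (∑ i, ∑ j, a i j * h i (z i j)) + B.card • Δ := by
            rw [hysum2]
            congr 1
            rw [Finset.sum_ite_mem, Finset.univ_inter, Finset.sum_const]
        _ ≤ (∑ i, ∑ j, a i j * h i (z i j)) + (t + 1 : ℝ) * Δ := by
            have hc : (B.card : ℝ) ≤ (t + 1 : ℝ) := by
              have := hBcard.trans_eq hfr
              exact_mod_cast this
            rw [nsmul_eq_mul]
            exact add_le_add (le_refl _) (mul_le_mul_of_nonneg_right hc hΔ0)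
    have h6 : (∑ i, ∑ j, a i j * h i (z i j)) < (∑ i, cl i (u i)) + ε / 2 := by
      have h7 : (∑ i, ∑ j, a i j * h i (z i j)) < ∑ i, (cl i (u i) + ε / (2 * I)) :=
        Finset.sum_lt_sum_of_nonempty ⟨⟨0, hI⟩, Finset.mem_univ _⟩ (fun i _ => hval i)
      have h8 : ∑ i : Fin I, (cl i (u i) + ε / (2 * I)) = (∑ i, cl i (u i)) + ε / 2 := by
        rw [Finset.sum_add_distrib, Finset.sum_const, Finset.card_univ, Fintype.card_fin,
          nsmul_eq_mul]
        have : (I : ℝ) * (ε / (2 * I)) = ε / 2 := by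
          field_simp
        rw [this]
      linarith
    have h9 : (∑ i, cl i (u i)) = s := hsval.symm
    linarith
  · -- infeasible case
    have hP : P = ∅ := by
      rw [hPdef]
      ext s
      simp only [Set.mem_setOf_eq, Set.mem_empty_iff_false, iff_false]
      rintro ⟨u, hu, hsum, -⟩
      exact hfeas ⟨u, hu, hsum⟩
    have hQ : Q = ∅ := by
      rw [hQdef]
      ext s
      simp only [Set.mem_setOf_eq, Set.mem_empty_iff_false, iff_false]
      rintro ⟨u, hu, hsum, -⟩
      exact hfeas ⟨u, fun i => (hDconv i).convexHull_eq ▸ hu i, hsum⟩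
    rw [hP, hQ, Real.sInf_empty]
    have h1 : (0:ℝ) ≤ (t + 1 : ℝ) := by positivity
    have := mul_nonneg h1 hΔ0
    linarith
end
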